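/- Let H₁ be an m₁-inverse Hopf quasigroup with S₁^{h₁} an automorphism, and H₂ an m₂-inverse Hopf quasigroup with S₂^{h₂} an automorphism. If m ∈ ℤ satisfies m ≡ m₁ (mod h₁) and m ≡ m₂ (mod h₂), then the tensor product H₁⊗H₂ with componentwise (tensor) algebra and coalgebra structure and antipode S₁⊗S₂ is an m-inverse Hopf quasigroup: (S₁⊗S₂)^m((h₍₂₎⊗h'₍₂₎)(g⊗g'))·(S₁⊗S₂)^{m+1}(h₍₁₎⊗h'₍₁₎) = ε(h)ε(h')(S₁⊗S₂)^m(g⊗g'). -/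

import Mathlib

open TensorProduct

section Aux
variable {k : Type*} [CommRing k] {H : Type*} [AddCommGroup H] [Module k H]

/-- the m-inverse property -/
def Pinv (μ : H ⊗[k] H →ₗ[k] H) (Δ : H →ₗ[k] H ⊗[k] H) (ε : H →ₗ[k] k)
    (S : H ≃ₗ[k] H) (n : ℤ) : Prop :=
  ∀ x y : H, μ ((TensorProduct.map ((S ^ n).toLinearMap ∘ₗ μ) (S ^ (n + 1)).toLinearMap)
        ((TensorProduct.comm k H (H ⊗[k] H))
          ((TensorProduct.assoc k H H H)
            ((TensorProduct.map Δ LinearMap.id) (x ⊗ₜ[k] y))))) = ε x • (S ^ n) y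

lemma mulmap (μ : H ⊗[k] H →ₗ[k] H) (φ : H ≃ₗ[k] H)
    (hφ : ∀ x y : H, φ (μ (x ⊗ₜ[k] y)) = μ (φ x ⊗ₜ[k] φ y)) (w : H ⊗[k] H) :
    μ ((TensorProduct.map φ.toLinearMap φ.toLinearMap) w) = φ (μ w) := by
  induction w using TensorProduct.induction_on with
  | zero => simp
  | tmul a b => simp [hφ]
  | add a b ha hb => simp [ha, hb]

lemma step (μ : H ⊗[k] H →ₗ[k] H) (Δ : H →ₗ[k] H ⊗[k] H) (ε : H →ₗ[k] k)
    (S : H ≃ₗ[k] H) (n h : ℤ)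
    (hφ : ∀ x y : H, (S ^ h) (μ (x ⊗ₜ[k] y)) = μ ((S ^ h) x ⊗ₜ[k] (S ^ h) y))
    (hn : Pinv μ Δ ε S n) : Pinv μ Δ ε S (n + h) := by
  intro x y
  have key1 : (S ^ (n + h)).toLinearMap = (S ^ h).toLinearMap ∘ₗ (S ^ n).toLinearMap := by
    rw [add_comm, zpow_add]; rfl
  have key2 : (S ^ (n + h + 1)).toLinearMap = (S ^ h).toLinearMap ∘ₗ (S ^ (n + 1)).toLinearMap := by
    rw [show n + h + 1 = (n + 1) + h by ring, add_comm (n+1), zpow_add]; rfl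
  rw [key1, key2, LinearMap.comp_assoc, TensorProduct.map_comp, LinearMap.comp_apply,
    mulmap μ (S ^ h) hφ, hn, map_smul]
  congr 1
  have : (S ^ (n + h)).toLinearMap y = ((S ^ h).toLinearMap ∘ₗ (S ^ n).toLinearMap) y := by
    rw [key1]
  simpa using this.symm

lemma inv_mul (μ : H ⊗[k] H →ₗ[k] H) (S : H ≃ₗ[k] H) (h : ℤ)
    (hφ : ∀ x y : H, (S ^ h) (μ (x ⊗ₜ[k] y)) = μ ((S ^ h) x ⊗ₜ[k] (S ^ h) y)) :
    ∀ x y : H, (S ^ (-h)) (μ (x ⊗ₜ[k] y)) = μ ((S ^ (-h)) x ⊗ₜ[k] (S ^ (-h)) y) := by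
  have e : ∀ z : H, (S ^ h) ((S ^ (-h)) z) = z := by
    intro z
    have : (S ^ h) ((S ^ (-h)) z) = (S ^ (h + -h)) z := by rw [zpow_add]; rfl
    simpa using this
  intro x y
  refine (S ^ h).injective ?_
  rw [e, hφ, e, e]

lemma Pinv_of_modEq (μ : H ⊗[k] H →ₗ[k] H) (Δ : H →ₗ[k] H ⊗[k] H) (ε : H →ₗ[k] k)
    (S : H ≃ₗ[k] H) (n h m : ℤ)
    (hφ : ∀ x y : H, (S ^ h) (μ (x ⊗ₜ[k] y)) = μ ((S ^ h) x ⊗ₜ[k] (S ^ h) y))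
    (hn : Pinv μ Δ ε S n) (hc : m ≡ n [ZMOD h]) : Pinv μ Δ ε S m := by
  obtain ⟨t, ht⟩ := Int.ModEq.dvd hc
  have key : ∀ s : ℤ, Pinv μ Δ ε S (n + h * s) := by
    intro s
    induction s using Int.induction_on with
    | zero => simpa using hn
    | succ i ih =>
      have e : n + h * (i + 1 : ℤ) = (n + h * i) + h := by ring
      rw [e]; exact step μ Δ ε S _ h hφ ih
    | pred i ih =>
      have e : n + h * (-i - 1 : ℤ) = (n + h * (-i)) + (-h) := by ring
      rw [e]; exact step μ Δ ε S _ (-h) (inv_mul μ S h hφ) ih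
  have hm : m = n + h * (-t) := by linear_combination -ht
  rw [hm]; exact key (-t)

end Aux


theorem stmt_18 {k : Type*} [CommRing k]
    {H₁ : Type*} [AddCommGroup H₁] [Module k H₁]
    {H₂ : Type*} [AddCommGroup H₂] [Module k H₂]
    (μ₁ : H₁ ⊗[k] H₁ →ₗ[k] H₁) (one₁ : H₁)
    (Δ₁ : H₁ →ₗ[k] H₁ ⊗[k] H₁) (ε₁ : H₁ →ₗ[k] k) (S₁ : H₁ ≃ₗ[k] H₁)
    (μ₂ : H₂ ⊗[k] H₂ →ₗ[k] H₂) (one₂ : H₂)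
    (Δ₂ : H₂ →ₗ[k] H₂ ⊗[k] H₂) (ε₂ : H₂ →ₗ[k] k) (S₂ : H₂ ≃ₗ[k] H₂)
    (m₁ m₂ h₁ h₂ m : ℤ)
    -- H₁ is an m₁-inverse Hopf quasigroup
    (h1_unit : ∀ h : H₁, μ₁ (one₁ ⊗ₜ[k] h) = h ∧ μ₁ (h ⊗ₜ[k] one₁) = h)
    (h1_coassoc : (TensorProduct.assoc k H₁ H₁ H₁).toLinearMap ∘ₗ
        (TensorProduct.map Δ₁ LinearMap.id) ∘ₗ Δ₁ = (TensorProduct.map LinearMap.id Δ₁) ∘ₗ Δ₁)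
    (h1_counit : ∀ h : H₁,
      (TensorProduct.lid k H₁) ((TensorProduct.map ε₁ LinearMap.id) (Δ₁ h)) = h ∧
      (TensorProduct.rid k H₁) ((TensorProduct.map LinearMap.id ε₁) (Δ₁ h)) = h)
    (h1_comul_mul : Δ₁ ∘ₗ μ₁ = (TensorProduct.map μ₁ μ₁) ∘ₗ
        (TensorProduct.tensorTensorTensorComm k H₁ H₁ H₁ H₁).toLinearMap ∘ₗ
        (TensorProduct.map Δ₁ Δ₁))
    (h1_counit_mul : ε₁ ∘ₗ μ₁ = (TensorProduct.lid k k).toLinearMap ∘ₗ (TensorProduct.map ε₁ ε₁))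
    (h1_comul_one : Δ₁ one₁ = one₁ ⊗ₜ[k] one₁) (h1_counit_one : ε₁ one₁ = 1)
    (h1_S_comul : Δ₁ ∘ₗ S₁.toLinearMap = (TensorProduct.comm k H₁ H₁).toLinearMap ∘ₗ
        (TensorProduct.map S₁.toLinearMap S₁.toLinearMap) ∘ₗ Δ₁)
    (h1_S_counit : ∀ h : H₁, ε₁ (S₁ h) = ε₁ h)
    (h1_S : ∀ h : H₁,
      μ₁ ((TensorProduct.map LinearMap.id S₁.toLinearMap) (Δ₁ h)) = ε₁ h • one₁ ∧
      μ₁ ((TensorProduct.map S₁.toLinearMap LinearMap.id) (Δ₁ h)) = ε₁ h • one₁)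
    (h1_m_inv : ∀ h g : H₁,
      μ₁ ((TensorProduct.map ((S₁ ^ m₁).toLinearMap ∘ₗ μ₁) (S₁ ^ (m₁ + 1)).toLinearMap)
        ((TensorProduct.comm k H₁ (H₁ ⊗[k] H₁))
          ((TensorProduct.assoc k H₁ H₁ H₁)
            ((TensorProduct.map Δ₁ LinearMap.id) (h ⊗ₜ[k] g))))) = ε₁ h • (S₁ ^ m₁) g)
    -- H₂ is an m₂-inverse Hopf quasigroup
    (h2_unit : ∀ h : H₂, μ₂ (one₂ ⊗ₜ[k] h) = h ∧ μ₂ (h ⊗ₜ[k] one₂) = h)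
    (h2_coassoc : (TensorProduct.assoc k H₂ H₂ H₂).toLinearMap ∘ₗ
        (TensorProduct.map Δ₂ LinearMap.id) ∘ₗ Δ₂ = (TensorProduct.map LinearMap.id Δ₂) ∘ₗ Δ₂)
    (h2_counit : ∀ h : H₂,
      (TensorProduct.lid k H₂) ((TensorProduct.map ε₂ LinearMap.id) (Δ₂ h)) = h ∧
      (TensorProduct.rid k H₂) ((TensorProduct.map LinearMap.id ε₂) (Δ₂ h)) = h)
    (h2_comul_mul : Δ₂ ∘ₗ μ₂ = (TensorProduct.map μ₂ μ₂) ∘ₗ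
        (TensorProduct.tensorTensorTensorComm k H₂ H₂ H₂ H₂).toLinearMap ∘ₗ
        (TensorProduct.map Δ₂ Δ₂))
    (h2_counit_mul : ε₂ ∘ₗ μ₂ = (TensorProduct.lid k k).toLinearMap ∘ₗ (TensorProduct.map ε₂ ε₂))
    (h2_comul_one : Δ₂ one₂ = one₂ ⊗ₜ[k] one₂) (h2_counit_one : ε₂ one₂ = 1)
    (h2_S_comul : Δ₂ ∘ₗ S₂.toLinearMap = (TensorProduct.comm k H₂ H₂).toLinearMap ∘ₗ
        (TensorProduct.map S₂.toLinearMap S₂.toLinearMap) ∘ₗ Δ₂)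
    (h2_S_counit : ∀ h : H₂, ε₂ (S₂ h) = ε₂ h)
    (h2_S : ∀ h : H₂,
      μ₂ ((TensorProduct.map LinearMap.id S₂.toLinearMap) (Δ₂ h)) = ε₂ h • one₂ ∧
      μ₂ ((TensorProduct.map S₂.toLinearMap LinearMap.id) (Δ₂ h)) = ε₂ h • one₂)
    (h2_m_inv : ∀ h g : H₂,
      μ₂ ((TensorProduct.map ((S₂ ^ m₂).toLinearMap ∘ₗ μ₂) (S₂ ^ (m₂ + 1)).toLinearMap)
        ((TensorProduct.comm k H₂ (H₂ ⊗[k] H₂))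
          ((TensorProduct.assoc k H₂ H₂ H₂)
            ((TensorProduct.map Δ₂ LinearMap.id) (h ⊗ₜ[k] g))))) = ε₂ h • (S₂ ^ m₂) g)
    -- S₁^{h₁} and S₂^{h₂} are Hopf quasigroup automorphisms
    (hA₁_mul : ∀ h g : H₁, (S₁ ^ h₁) (μ₁ (h ⊗ₜ[k] g)) = μ₁ ((S₁ ^ h₁) h ⊗ₜ[k] (S₁ ^ h₁) g))
    (hA₁_comul : ∀ h : H₁,
      Δ₁ ((S₁ ^ h₁) h) = (TensorProduct.map (S₁ ^ h₁).toLinearMap (S₁ ^ h₁).toLinearMap) (Δ₁ h))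
    (hA₂_mul : ∀ h g : H₂, (S₂ ^ h₂) (μ₂ (h ⊗ₜ[k] g)) = μ₂ ((S₂ ^ h₂) h ⊗ₜ[k] (S₂ ^ h₂) g))
    (hA₂_comul : ∀ h : H₂,
      Δ₂ ((S₂ ^ h₂) h) = (TensorProduct.map (S₂ ^ h₂).toLinearMap (S₂ ^ h₂).toLinearMap) (Δ₂ h))
    -- the congruences  m ≡ m₁ (mod h₁),  m ≡ m₂ (mod h₂)
    (hc₁ : m ≡ m₁ [ZMOD h₁]) (hc₂ : m ≡ m₂ [ZMOD h₂]) :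
    -- the tensor product is an m-inverse Hopf quasigroup
    let μt : ((H₁ ⊗[k] H₂) ⊗[k] (H₁ ⊗[k] H₂)) →ₗ[k] H₁ ⊗[k] H₂ :=
      (TensorProduct.map μ₁ μ₂) ∘ₗ (TensorProduct.tensorTensorTensorComm k H₁ H₂ H₁ H₂).toLinearMap
    let Δt : (H₁ ⊗[k] H₂) →ₗ[k] ((H₁ ⊗[k] H₂) ⊗[k] (H₁ ⊗[k] H₂)) :=
      (TensorProduct.tensorTensorTensorComm k H₁ H₁ H₂ H₂).toLinearMap ∘ₗ
        (TensorProduct.map Δ₁ Δ₂)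
    let εt : (H₁ ⊗[k] H₂) →ₗ[k] k :=
      (TensorProduct.lid k k).toLinearMap ∘ₗ (TensorProduct.map ε₁ ε₂)
    let St : (H₁ ⊗[k] H₂) ≃ₗ[k] (H₁ ⊗[k] H₂) := TensorProduct.congr S₁ S₂
    ∀ h g : H₁ ⊗[k] H₂,
      μt ((TensorProduct.map ((St ^ m).toLinearMap ∘ₗ μt) (St ^ (m + 1)).toLinearMap)
        ((TensorProduct.comm k (H₁ ⊗[k] H₂) ((H₁ ⊗[k] H₂) ⊗[k] (H₁ ⊗[k] H₂)))
          ((TensorProduct.assoc k (H₁ ⊗[k] H₂) (H₁ ⊗[k] H₂) (H₁ ⊗[k] H₂))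
            ((TensorProduct.map Δt LinearMap.id) (h ⊗ₜ[k] g))))) = εt h • (St ^ m) g := by
  intro μt Δt εt St h g
  have P1 : Pinv μ₁ Δ₁ ε₁ S₁ m := Pinv_of_modEq μ₁ Δ₁ ε₁ S₁ m₁ h₁ m hA₁_mul h1_m_inv hc₁
  have P2 : Pinv μ₂ Δ₂ ε₂ S₂ m := Pinv_of_modEq μ₂ Δ₂ ε₂ S₂ m₂ h₂ m hA₂_mul h2_m_inv hc₂
  have hSt : ∀ (n : ℤ) (c : H₁) (d : H₂),
      ((TensorProduct.congr S₁ S₂) ^ n) (c ⊗ₜ[k] d) = ((S₁ ^ n) c) ⊗ₜ[k] ((S₂ ^ n) d) := by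
    intro n c d; rw [TensorProduct.congr_zpow]; simp
  simp only [μt, Δt, εt, St]
  induction h using TensorProduct.induction_on with
  | zero => simp
  | add x x' ihx ihx' => simp only [add_tmul, map_add, ihx, ihx', add_smul]
  | tmul a b =>
    induction g using TensorProduct.induction_on with
    | zero => simp
    | add y y' ihy ihy' => simp only [tmul_add, map_add, ihy, ihy', smul_add]
    | tmul c d =>
      have key : ∀ (u : H₁ ⊗[k] H₁) (v : H₂ ⊗[k] H₂),
          (TensorProduct.map μ₁ μ₂ ∘ₗ (TensorProduct.tensorTensorTensorComm k H₁ H₂ H₁ H₂).toLinearMap)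
            ((TensorProduct.map ((TensorProduct.congr S₁ S₂ ^ m).toLinearMap ∘ₗ
                TensorProduct.map μ₁ μ₂ ∘ₗ (TensorProduct.tensorTensorTensorComm k H₁ H₂ H₁ H₂).toLinearMap)
                (TensorProduct.congr S₁ S₂ ^ (m + 1)).toLinearMap)
              ((TensorProduct.comm k (H₁ ⊗[k] H₂) ((H₁ ⊗[k] H₂) ⊗[k] (H₁ ⊗[k] H₂)))
                ((TensorProduct.assoc k (H₁ ⊗[k] H₂) (H₁ ⊗[k] H₂) (H₁ ⊗[k] H₂))
                  (((TensorProduct.tensorTensorTensorComm k H₁ H₁ H₂ H₂) (u ⊗ₜ[k] v)) ⊗ₜ[k] (c ⊗ₜ[k] d))))) =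
          (μ₁ ((TensorProduct.map ((S₁ ^ m).toLinearMap ∘ₗ μ₁) (S₁ ^ (m + 1)).toLinearMap)
              ((TensorProduct.comm k H₁ (H₁ ⊗[k] H₁)) ((TensorProduct.assoc k H₁ H₁ H₁) (u ⊗ₜ[k] c))))) ⊗ₜ[k]
          (μ₂ ((TensorProduct.map ((S₂ ^ m).toLinearMap ∘ₗ μ₂) (S₂ ^ (m + 1)).toLinearMap)
              ((TensorProduct.comm k H₂ (H₂ ⊗[k] H₂)) ((TensorProduct.assoc k H₂ H₂ H₂) (v ⊗ₜ[k] d))))) := by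
        intro u v
        induction u using TensorProduct.induction_on with
        | zero => simp
        | add u u' ihu ihu' => simp only [add_tmul, tmul_add, map_add, ihu, ihu']
        | tmul a1 a2 =>
          induction v using TensorProduct.induction_on with
          | zero => simp
          | add v v' ihv ihv' => simp only [add_tmul, tmul_add, map_add, ihv, ihv']
          | tmul b1 b2 =>
            simp [TensorProduct.tensorTensorTensorComm_tmul, TensorProduct.assoc_tmul,
              TensorProduct.comm_tmul, TensorProduct.map_tmul, LinearMap.comp_apply, hSt]
      have e0 : (TensorProduct.map ((TensorProduct.tensorTensorTensorComm k H₁ H₁ H₂ H₂).toLinearMap ∘ₗ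
            TensorProduct.map Δ₁ Δ₂) LinearMap.id) ((a ⊗ₜ[k] b) ⊗ₜ[k] (c ⊗ₜ[k] d)) =
          ((TensorProduct.tensorTensorTensorComm k H₁ H₁ H₂ H₂) ((Δ₁ a) ⊗ₜ[k] (Δ₂ b))) ⊗ₜ[k] (c ⊗ₜ[k] d) := by
        simp
      rw [e0, key]
      have e1 : μ₁ ((TensorProduct.map ((S₁ ^ m).toLinearMap ∘ₗ μ₁) (S₁ ^ (m + 1)).toLinearMap)
          ((TensorProduct.comm k H₁ (H₁ ⊗[k] H₁)) ((TensorProduct.assoc k H₁ H₁ H₁) ((Δ₁ a) ⊗ₜ[k] c)))) =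
          ε₁ a • (S₁ ^ m) c := by
        have := P1 a c; simpa using this
      have e2 : μ₂ ((TensorProduct.map ((S₂ ^ m).toLinearMap ∘ₗ μ₂) (S₂ ^ (m + 1)).toLinearMap)
          ((TensorProduct.comm k H₂ (H₂ ⊗[k] H₂)) ((TensorProduct.assoc k H₂ H₂ H₂) ((Δ₂ b) ⊗ₜ[k] d)))) =
          ε₂ b • (S₂ ^ m) d := by
        have := P2 b d; simpa using this
      rw [e1, e2]
      simp [hSt, TensorProduct.smul_tmul, TensorProduct.tmul_smul, smul_smul, mul_comm]
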